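/- arXiv:1905.09301 — 2 statements merged into one kernel-verified Lean document; each statement's English description precedes it below -/
import Mathlib

section
/- Suppose the index set T of 𝒫 = {P_t : t ∈ T} is a bounded subset of ℝ^m equipped with a norm ‖·‖, T_c is an open set containing the convex hull of T, and f_{T_c} : ℝ × T_c → ℝ is a Borel measurable map with f_{T_c}(·, t) = f_t for every t ∈ T (so that E^{P_t}(f) = E^P(f_{T_c}(·, t)) for all t ∈ T) which is differentiable with respect to its second argument t on all of T_c. If there exists a Borel measurable map F : ℝ → ℝ with E^P(|F|) < +∞ such that ‖∇_t f_{T_c}(x, t)‖ ≤ F(x) for all x ∈ ℝ and all t ∈ T_c, then Ê̲_n^𝒫(f) is a strongly consistent estimator of E̲^𝒫(f). -/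
open MeasureTheory Filter Topology ProbabilityTheory
open scoped ENNReal

noncomputable section

/-- The positive part of an extended real number, as an element of `ℝ≥0∞`. -/
def epos (x : EReal) : ℝ≥0∞ := if x = ⊤ then ⊤ else ENNReal.ofReal x.toReal

/-- The (possibly infinite) expectation `E(g) = ∫ g⁺ − ∫ g⁻` of an extended-real map. -/
def eExp {Ω : Type*} [MeasurableSpace Ω] (μ : Measure Ω) (g : Ω → EReal) : EReal :=
  ((∫⁻ ω, epos (g ω) ∂μ : ℝ≥0∞) : EReal) - ((∫⁻ ω, epos (-(g ω)) ∂μ : ℝ≥0∞) : EReal)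

/-- `E(g)` exists: at least one of `E(g⁺)`, `E(g⁻)` is finite. -/
def eExpExists {Ω : Type*} [MeasurableSpace Ω] (μ : Measure Ω) (g : Ω → EReal) : Prop :=
  (∫⁻ ω, epos (g ω) ∂μ) ≠ ⊤ ∨ (∫⁻ ω, epos (-(g ω)) ∂μ) ≠ ⊤

/-- Outer expectation of an arbitrary extended-real map: the infimum of `E(g)` over all
measurable `g ≥ h` whose expectation exists. -/
def outerExp {Ω : Type*} [MeasurableSpace Ω] (μ : Measure Ω) (h : Ω → EReal) : EReal :=
  sInf {y : EReal | ∃ g : Ω → EReal,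
    Measurable g ∧ (∀ ω, h ω ≤ g ω) ∧ eExpExists μ g ∧ eExp μ g = y}

/-- Inner expectation of an arbitrary extended-real map. -/
def innerExp {Ω : Type*} [MeasurableSpace Ω] (μ : Measure Ω) (h : Ω → EReal) : EReal :=
  - outerExp μ (fun ω => - h ω)

/-- `g` is a minimal measurable cover of `h` w.r.t. `μ`: it is measurable, dominates `h`
pointwise, and is a.s. below any measurable map dominating `h` pointwise. -/
def IsMinMeasCover {Ω : Type*} [MeasurableSpace Ω] (μ : Measure Ω) (h g : Ω → EReal) : Prop :=
  Measurable g ∧ (∀ ω, h ω ≤ g ω) ∧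
    ∀ g' : Ω → EReal, Measurable g' → (∀ ω, h ω ≤ g' ω) → ∀ᵐ ω ∂μ, g ω ≤ g' ω

/-- Absolute value on extended reals. -/
def eabs (x : EReal) : EReal := max x (-x)

/-! ### Auxiliary lemmas -/

lemma aux_ciInf_coe {ι : Sort*} [Nonempty ι] (f : ι → ℝ) (hf : BddBelow (Set.range f)) :
    (⨅ i, ((f i : ℝ) : EReal)) = ((⨅ i, f i : ℝ) : EReal) :=
  (EReal.coe_strictMono.monotone.map_ciInf_of_continuousAt
    continuous_coe_real_ereal.continuousAt hf).symm

lemma aux_eabs_coe (r : ℝ) : eabs ((r : ℝ) : EReal) = ((|r| : ℝ) : EReal) := by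
  rw [eabs, abs_eq_max_neg, EReal.coe_strictMono.monotone.map_max, EReal.coe_neg]

lemma aux_abs_ciInf_sub {ι : Sort*} [Nonempty ι] {f g : ι → ℝ}
    (hf : BddBelow (Set.range f)) (hg : BddBelow (Set.range g)) {ε : ℝ}
    (h : ∀ i, |f i - g i| ≤ ε) : |(⨅ i, f i) - ⨅ i, g i| ≤ ε := by
  have key : ∀ (u v : ι → ℝ), BddBelow (Set.range u) → (∀ i, u i ≤ v i + ε) →
      (⨅ i, u i) ≤ (⨅ i, v i) + ε := by
    intro u v hu huv
    rw [← sub_le_iff_le_add]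
    exact le_ciInf fun i => sub_le_iff_le_add.2 ((ciInf_le hu i).trans (huv i))
  rw [abs_sub_le_iff]
  constructor
  · have := key f g hf fun i => by have := (abs_le.1 (h i)).2; linarith
    linarith
  · have := key g f hg fun i => by have := (abs_le.1 (h i)).1; linarith
    linarith

lemma aux_inf_dense {α : Type*} [PseudoMetricSpace α] {T T₀ : Set α} (hT₀ : T₀ ⊆ T)
    (hne : T₀.Nonempty)
    (hdense : ∀ t ∈ T, ∀ ε > 0, ∃ s ∈ T₀, dist t s < ε) {g : α → ℝ} {L : ℝ} (hL : 0 ≤ L)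
    (hlip : ∀ t ∈ T, ∀ s ∈ T, |g t - g s| ≤ L * dist t s) (hbdd : BddBelow (g '' T)) :
    (⨅ t : T, g t) = ⨅ t : T₀, g t := by
  haveI : Nonempty ↥T₀ := hne.to_subtype
  haveI : Nonempty ↥T := (hne.mono hT₀).to_subtype
  have hbr : BddBelow (Set.range fun t : T => g ↑t) := by
    rwa [← Set.image_eq_range]
  have hbr0 : BddBelow (Set.range fun t : T₀ => g ↑t) := by
    rw [← Set.image_eq_range]
    exact hbdd.mono (Set.image_mono hT₀)
  apply le_antisymm
  · exact le_ciInf fun s => ciInf_le hbr ⟨s, hT₀ s.2⟩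
  · refine le_ciInf fun t => le_of_forall_pos_le_add fun ε hε => ?_
    obtain ⟨s, hs, hds⟩ := hdense t t.2 (ε / (L + 1)) (by positivity)
    have h1 : g s ≤ g ↑t + L * dist ↑t s := by
      have h0 := hlip s (hT₀ hs) t t.2
      have h0' := (le_abs_self _).trans h0
      rw [dist_comm] at h0'
      linarith
    have h2 : L * dist ↑t s ≤ ε := by
      calc L * dist ↑t s ≤ L * (ε / (L + 1)) := mul_le_mul_of_nonneg_left hds.le hL
        _ ≤ (L + 1) * (ε / (L + 1)) :=
            mul_le_mul_of_nonneg_right (by linarith) (by positivity)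
        _ = ε := mul_div_cancel₀ _ (by positivity)
    calc (⨅ t : T₀, g ↑t) ≤ g s := ciInf_le hbr0 ⟨s, hs⟩
      _ ≤ g ↑t + ε := by linarith

/-- The empirical average of `h` along the first `n` coordinates. -/
def dcAvg (h : ℝ → ℝ) (n : ℕ) (ω : ℕ → ℝ) : ℝ :=
  (n : ℝ)⁻¹ * ∑ k ∈ Finset.range n, h (ω k)

lemma aux_bddBelow_of_lip {α : Type*} [PseudoMetricSpace α] {T : Set α} {t₀ : α}
    (ht₀ : t₀ ∈ T) {R : ℝ} (hR : ∀ ⦃x⦄, x ∈ T → ∀ ⦃y⦄, y ∈ T → dist x y ≤ R)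
    {g : α → ℝ} {L : ℝ} (hL : 0 ≤ L)
    (hlip : ∀ t ∈ T, ∀ s ∈ T, |g t - g s| ≤ L * dist t s) : BddBelow (g '' T) := by
  refine ⟨g t₀ - L * R, ?_⟩
  rintro y ⟨t, ht, rfl⟩
  have h1 := hlip t ht t₀ ht₀
  have h2 := (abs_le.1 h1).1
  have h3 : L * dist t t₀ ≤ L * R := mul_le_mul_of_nonneg_left (hR ht ht₀) hL
  linarith

/-- Strong law of large numbers for the empirical averages of `h` under the
infinite product structure given by `hmap` and `hind`. -/
lemma aux_slln {P : Measure ℝ} [IsProbabilityMeasure P] {μ : Measure (ℕ → ℝ)}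
    [IsProbabilityMeasure μ]
    (hmap : ∀ k : ℕ, μ.map (fun ω => ω k) = P)
    (hind : iIndepFun
      (fun k (ω : ℕ → ℝ) => ω k) μ)
    (h : ℝ → ℝ) (hm : Measurable h) (hi : Integrable h P) :
    ∀ᵐ ω ∂μ, Tendsto (fun n => dcAvg h n ω) atTop (𝓝 (∫ x, h x ∂P)) := by
  have hmk : ∀ k : ℕ, Measurable fun ω : ℕ → ℝ => h (ω k) := fun k =>
    hm.comp (measurable_pi_apply k)
  have hint : Integrable (fun ω : ℕ → ℝ => h (ω 0)) μ := by
    have h0 : Integrable h (μ.map fun ω : ℕ → ℝ => ω 0) := by rw [hmap 0]; exact hi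
    exact (integrable_map_measure hm.aestronglyMeasurable
      (measurable_pi_apply 0).aemeasurable).1 h0
  have hindep : Pairwise (Function.onFun (fun f g => IndepFun f g μ) fun k (ω : ℕ → ℝ) => h (ω k)) := fun i j hij =>
    (hind.indepFun hij).comp hm hm
  have hident : ∀ i, IdentDistrib (fun ω : ℕ → ℝ => h (ω i)) (fun ω => h (ω 0)) μ μ := by
    intro i
    refine ⟨(hmk i).aemeasurable, (hmk 0).aemeasurable, ?_⟩
    calc μ.map (fun ω : ℕ → ℝ => h (ω i)) = (μ.map fun ω : ℕ → ℝ => ω i).map h := by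
          rw [Measure.map_map hm (measurable_pi_apply i)]; rfl
      _ = (μ.map fun ω : ℕ → ℝ => ω 0).map h := by rw [hmap i, hmap 0]
      _ = μ.map fun ω : ℕ → ℝ => h (ω 0) := by
          rw [Measure.map_map hm (measurable_pi_apply 0)]; rfl
  have hexp : (∫ ω, h (ω 0) ∂μ) = ∫ x, h x ∂P := by
    rw [← hmap 0, integral_map (measurable_pi_apply 0).aemeasurable]
    exact hm.aestronglyMeasurable
  have hconc := strong_law_ae_real (fun k (ω : ℕ → ℝ) => h (ω k)) hint hindep hident
  filter_upwards [hconc] with ω hω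
  rw [hexp] at hω
  simpa [dcAvg, div_eq_inv_mul] using hω

/-- Suppose `T ⊆ ℝ^m` is bounded, `T_c` is an open set containing the convex
hull of `T`, and `f_{T_c} : ℝ × T_c → ℝ` is a Borel measurable extension of the family
`(f_t)_{t∈T}` which is differentiable in its second argument on all of `T_c`, with gradient
bounded by a Borel measurable `F : ℝ → ℝ` satisfying `E^P(|F|) < +∞`. Then `Ê̲_n^𝒫(f)` is a
strongly consistent estimator of `E̲^𝒫(f)`. -/
theorem differentiable_consistency
    {m : ℕ}
    (T Tc : Set (EuclideanSpace ℝ (Fin m))) (hTne : T.Nonempty)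
    (hTbdd : Bornology.IsBounded T)
    (hTc : IsOpen Tc) (hhull : convexHull ℝ T ⊆ Tc)
    (Pt : EuclideanSpace ℝ (Fin m) → Measure ℝ)
    (hPt : ∀ t ∈ T, IsProbabilityMeasure (Pt t))
    (P : Measure ℝ) [IsProbabilityMeasure P]
    (f : ℝ → ℝ) (hf : Measurable f)
    (hfint : ∀ t ∈ T, Integrable f (Pt t))
    (hsup : BddAbove ((fun t => ∫ x, |f x| ∂(Pt t)) '' T))
    (ft : EuclideanSpace ℝ (Fin m) → ℝ → ℝ)
    (hftm : ∀ t ∈ T, Measurable (ft t)) (hfti : ∀ t ∈ T, Integrable (ft t) P)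
    (hfte : ∀ t ∈ T, ∫ x, ft t x ∂P = ∫ x, f x ∂(Pt t))
    (hftea : ∀ t ∈ T, ∫ x, |ft t x| ∂P = ∫ x, |f x| ∂(Pt t))
    -- the measurable extension `f_{T_c}` and its gradient in the parameter
    (fTc : ℝ → EuclideanSpace ℝ (Fin m) → ℝ)
    (hfTcm : Measurable (fun p : ℝ × EuclideanSpace ℝ (Fin m) => fTc p.1 p.2))
    (hagree : ∀ t ∈ T, ∀ x : ℝ, fTc x t = ft t x)
    (D : ℝ → EuclideanSpace ℝ (Fin m) → EuclideanSpace ℝ (Fin m))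
    (hdiff : ∀ x : ℝ, ∀ t ∈ Tc, HasGradientAt (fun s => fTc x s) (D x t) t)
    (F : ℝ → ℝ) (hFm : Measurable F) (hFi : Integrable F P)
    (hgrad : ∀ x : ℝ, ∀ t ∈ Tc, ‖D x t‖ ≤ F x)
    (μ : Measure (ℕ → ℝ)) [IsProbabilityMeasure μ]
    (hmap : ∀ k : ℕ, μ.map (fun ω => ω k) = P)
    (hind : iIndepFun
      (fun k (ω : ℕ → ℝ) => ω k) μ) :
    ∃ H : ℕ → (ℕ → ℝ) → EReal,
      (∀ n : ℕ, IsMinMeasCover μ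
        (fun ω => eabs ((⨅ t : T, (((n : ℝ)⁻¹ *
            ∑ k ∈ Finset.range n, ft t (ω k) : ℝ) : EReal)) -
          ⨅ t : T, ((∫ x, f x ∂(Pt t) : ℝ) : EReal))) (H n)) ∧
      ∀ᵐ ω ∂μ, Tendsto (fun n : ℕ => H n ω) atTop (𝓝 (0 : EReal)) := by
  
  haveI : Nonempty ↥T := hTne.to_subtype
  obtain ⟨t₀, ht₀⟩ := hTne
  have ht₀c : t₀ ∈ Tc := hhull (subset_convexHull ℝ T ht₀)
  have hF0 : ∀ x, 0 ≤ F x := fun x => (norm_nonneg _).trans (hgrad x t₀ ht₀c)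
  set CF : ℝ := ∫ x, F x ∂P with hCFdef
  have hCF0 : 0 ≤ CF := integral_nonneg hF0
  have hL0 : ∀ n ω, 0 ≤ dcAvg F n ω := fun n ω =>
    mul_nonneg (by positivity) (Finset.sum_nonneg fun k _ => hF0 _)
  -- Lipschitz continuity of `fTc x` on the convex hull of `T`
  have hfTclip : ∀ x : ℝ, ∀ t ∈ convexHull ℝ T, ∀ s ∈ convexHull ℝ T,
      |fTc x t - fTc x s| ≤ F x * dist t s := by
    intro x t ht s hs
    rw [← Real.norm_eq_abs, dist_eq_norm]
    refine Convex.norm_image_sub_le_of_norm_hasFDerivWithin_le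
      (f' := fun u => (InnerProductSpace.toDual ℝ _ (D x u) : _ →L[ℝ] ℝ))
      (fun u hu => (hasGradientAt_iff_hasFDerivAt.1
        (hdiff x u (hhull hu))).hasFDerivWithinAt) (fun u hu => ?_)
      (convex_convexHull ℝ T) hs ht
    rw [LinearIsometryEquiv.norm_map]
    exact hgrad x u (hhull hu)
  have hftlip : ∀ x : ℝ, ∀ t ∈ T, ∀ s ∈ T, |ft t x - ft s x| ≤ F x * dist t s := by
    intro x t ht s hs
    rw [← hagree t ht x, ← hagree s hs x]
    exact hfTclip x t (subset_convexHull ℝ T ht) s (subset_convexHull ℝ T hs)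
  -- Lipschitz continuity of the empirical averages
  have hAlip : ∀ n (ω : ℕ → ℝ), ∀ t ∈ T, ∀ s ∈ T,
      |dcAvg (ft t) n ω - dcAvg (ft s) n ω| ≤ dcAvg F n ω * dist t s := by
    intro n ω t ht s hs
    have e1 : dcAvg (ft t) n ω - dcAvg (ft s) n ω
        = (n : ℝ)⁻¹ * ∑ k ∈ Finset.range n, (ft t (ω k) - ft s (ω k)) := by
      rw [dcAvg, dcAvg, ← mul_sub, Finset.sum_sub_distrib]
    rw [e1, abs_mul, abs_of_nonneg (by positivity : (0:ℝ) ≤ (n:ℝ)⁻¹), dcAvg, mul_assoc,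
      Finset.sum_mul]
    refine mul_le_mul_of_nonneg_left ?_ (by positivity)
    refine (Finset.abs_sum_le_sum_abs _ _).trans (Finset.sum_le_sum fun k _ => ?_)
    exact hftlip (ω k) t ht s hs
  -- Lipschitz continuity of the mean value function
  have havlip : ∀ t ∈ T, ∀ s ∈ T,
      |(∫ x, f x ∂(Pt t)) - ∫ x, f x ∂(Pt s)| ≤ CF * dist t s := by
    intro t ht s hs
    rw [← hfte t ht, ← hfte s hs, ← integral_sub (hfti t ht) (hfti s hs)]
    calc |∫ x, (ft t x - ft s x) ∂P| ≤ ∫ x, |ft t x - ft s x| ∂P := by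
          simpa [Real.norm_eq_abs] using
            norm_integral_le_integral_norm (μ := P) (f := fun x => ft t x - ft s x)
      _ ≤ ∫ x, F x * dist t s ∂P := by
          refine integral_mono ((hfti t ht).sub (hfti s hs)).abs (hFi.mul_const _) ?_
          exact fun x => hftlip x t ht s hs
      _ = CF * dist t s := by rw [integral_mul_const]
  -- diameter bound
  obtain ⟨R, hR⟩ := Metric.isBounded_iff.1 hTbdd
  -- lower bounds for the two families
  have hAbdd : ∀ n (ω : ℕ → ℝ), BddBelow ((fun t => dcAvg (ft t) n ω) '' T) := fun n ω =>
    aux_bddBelow_of_lip ht₀ hR (hL0 n ω) (hAlip n ω)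
  have havbdd : BddBelow ((fun t => ∫ x, f x ∂(Pt t)) '' T) :=
    aux_bddBelow_of_lip ht₀ hR hCF0 havlip
  have him : ∀ g : EuclideanSpace ℝ (Fin m) → ℝ, BddBelow (g '' T) →
      BddBelow (Set.range fun t : T => g ↑t) := fun g h => by rwa [← Set.image_eq_range]
  -- the real-valued infima
  set φ : ℕ → (ℕ → ℝ) → ℝ := fun n ω => ⨅ t : T, dcAvg (ft ↑t) n ω with hφdef
  set c : ℝ := ⨅ t : T, ∫ x, f x ∂(Pt ↑t) with hcdef
  -- the pointwise representation of the EReal-valued expression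
  have hrepr : ∀ (n : ℕ) (ω : ℕ → ℝ),
      eabs ((⨅ t : T, (((n : ℝ)⁻¹ *
            ∑ k ∈ Finset.range n, ft t (ω k) : ℝ) : EReal)) -
          ⨅ t : T, ((∫ x, f x ∂(Pt t) : ℝ) : EReal)) = ((|φ n ω - c| : ℝ) : EReal) := by
    intro n ω
    have e1 : (⨅ t : T, (((n : ℝ)⁻¹ *
        ∑ k ∈ Finset.range n, ft t (ω k) : ℝ) : EReal)) = ((φ n ω : ℝ) : EReal) := by
      rw [hφdef]
      exact aux_ciInf_coe (fun t : T => dcAvg (ft ↑t) n ω) (him _ (hAbdd n ω))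
    have e2 : (⨅ t : T, ((∫ x, f x ∂(Pt t) : ℝ) : EReal)) = ((c : ℝ) : EReal) := by
      rw [hcdef]
      exact aux_ciInf_coe (fun t : T => ∫ x, f x ∂(Pt ↑t)) (him _ havbdd)
    rw [e1, e2, ← EReal.coe_sub, aux_eabs_coe]
  -- countable dense subset of T together with finite nets
  obtain ⟨D0, hD0c, hD0d⟩ := TopologicalSpace.exists_countable_dense ↥T
  have hnet : ∀ j : ℕ, ∃ N : Set (EuclideanSpace ℝ (Fin m)), N ⊆ T ∧ N.Finite ∧
      ∀ t ∈ T, ∃ s ∈ N, dist t s < 1 / (j + 1) := by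
    intro j
    have htb : TotallyBounded T :=
      hTbdd.isCompact_closure.totallyBounded.subset subset_closure
    have hd : {p : EuclideanSpace ℝ (Fin m) × EuclideanSpace ℝ (Fin m) |
        dist p.1 p.2 < 1 / (j + 1)} ∈ uniformity (EuclideanSpace ℝ (Fin m)) :=
      Metric.dist_mem_uniformity (by positivity)
    obtain ⟨N, hNT, hNfin, hcov⟩ := totallyBounded_iff_subset.1 htb _ hd
    refine ⟨N, hNT, hNfin, fun t ht => ?_⟩
    obtain ⟨s, hs1, hs2⟩ := Set.mem_iUnion₂.1 (hcov ht)
    exact ⟨s, hs1, hs2⟩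
  choose N hNsub hNfin hNcov using hnet
  set T₁ : Set (EuclideanSpace ℝ (Fin m)) := (Subtype.val '' D0) ∪ ⋃ j, N j with hT₁def
  have hT₁sub : T₁ ⊆ T := by
    rw [hT₁def]
    exact Set.union_subset (Subtype.coe_image_subset T D0)
      (Set.iUnion_subset fun j => hNsub j)
  have hT₁c : T₁.Countable :=
    (hD0c.image _).union (Set.countable_iUnion fun j => (hNfin j).countable)
  have hT₁ne : T₁.Nonempty := by
    obtain ⟨y, hy⟩ := hD0d.nonempty
    exact ⟨y, Or.inl ⟨y, hy, rfl⟩⟩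
  have hT₁dense : ∀ t ∈ T, ∀ ε > 0, ∃ s ∈ T₁, dist t s < ε := by
    intro t ht ε hε
    obtain ⟨y, hy1, hy2⟩ := Metric.dense_iff.1 hD0d (⟨t, ht⟩ : ↥T) ε hε
    refine ⟨↑y, Or.inl ⟨y, hy2, rfl⟩, ?_⟩
    have := Metric.mem_ball.1 hy1
    rw [Subtype.dist_eq] at this
    rw [dist_comm]
    exact this
  -- measurability of the real infima
  haveI : Countable ↥T₁ := hT₁c.to_subtype
  have hφm : ∀ n, Measurable (φ n) := by
    intro n
    have heq : φ n = fun ω => ⨅ t : T₁, dcAvg (ft ↑t) n ω := by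
      funext ω
      rw [hφdef]
      exact aux_inf_dense hT₁sub hT₁ne hT₁dense (hL0 n ω) (hAlip n ω) (hAbdd n ω)
    rw [heq]
    refine Measurable.iInf fun t => ?_
    unfold dcAvg
    exact (Finset.measurable_sum _ fun k _ =>
      (hftm ↑t (hT₁sub t.2)).comp (measurable_pi_apply k)).const_mul _
  -- strong law of large numbers at the points of T₁, and for F
  have hsllnA : ∀ t ∈ T, ∀ᵐ ω ∂μ, Tendsto (fun n => dcAvg (ft t) n ω) atTop
      (𝓝 (∫ x, f x ∂(Pt t))) := by
    intro t ht
    have := aux_slln hmap hind (ft t) (hftm t ht) (hfti t ht)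
    rw [hfte t ht] at this
    exact this
  have hsllnF : ∀ᵐ ω ∂μ, Tendsto (fun n => dcAvg F n ω) atTop (𝓝 CF) :=
    aux_slln hmap hind F hFm hFi
  -- the almost sure event
  have hae : ∀ᵐ ω ∂μ, (∀ t ∈ T₁, Tendsto (fun n => dcAvg (ft t) n ω) atTop
      (𝓝 (∫ x, f x ∂(Pt t)))) ∧ Tendsto (fun n => dcAvg F n ω) atTop (𝓝 CF) :=
    ((ae_ball_iff hT₁c).2 fun t ht => hsllnA t (hT₁sub ht)).and hsllnF
  -- conclusion
  refine ⟨fun n ω => eabs ((⨅ t : T, (((n : ℝ)⁻¹ *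
      ∑ k ∈ Finset.range n, ft t (ω k) : ℝ) : EReal)) -
      ⨅ t : T, ((∫ x, f x ∂(Pt t) : ℝ) : EReal)),
    fun n => ⟨?_, fun ω => le_rfl, fun g' hg' hle => Filter.Eventually.of_forall hle⟩, ?_⟩
  · -- measurability
    have heq : (fun ω : ℕ → ℝ => eabs ((⨅ t : T, (((n : ℝ)⁻¹ *
        ∑ k ∈ Finset.range n, ft t (ω k) : ℝ) : EReal)) -
        ⨅ t : T, ((∫ x, f x ∂(Pt t) : ℝ) : EReal)))
        = fun ω => ((|φ n ω - c| : ℝ) : EReal) := funext fun ω => hrepr n ω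
    beta_reduce
    rw [heq]
    exact measurable_coe_real_ereal.comp (((hφm n).sub measurable_const).abs)
  · -- convergence
    filter_upwards [hae] with ω hω
    obtain ⟨hω1, hω2⟩ := hω
    have heq : (fun n : ℕ => eabs ((⨅ t : T, (((n : ℝ)⁻¹ *
        ∑ k ∈ Finset.range n, ft t (ω k) : ℝ) : EReal)) -
        ⨅ t : T, ((∫ x, f x ∂(Pt t) : ℝ) : EReal)))
        = fun n => ((|φ n ω - c| : ℝ) : EReal) := funext fun n => hrepr n ω
    beta_reduce
    rw [heq, show (0 : EReal) = ((0 : ℝ) : EReal) from EReal.coe_zero.symm,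
      EReal.tendsto_coe]
    -- it remains to show |φ n ω - c| → 0, which follows from φ n ω → c
    have hφt : Tendsto (fun n => φ n ω) atTop (𝓝 c) := by
      rw [Metric.tendsto_atTop]
      intro ε hε
      obtain ⟨j, hj⟩ : ∃ j : ℕ, (2 * CF + 1) * (1 / (j + 1) : ℝ) < ε / 2 := by
        have h1 : Tendsto (fun j : ℕ => (2 * CF + 1) * (1 / (j + 1) : ℝ)) atTop (𝓝 0) := by
          simpa using tendsto_one_div_add_atTop_nhds_zero_nat.const_mul (2 * CF + 1)
        exact (h1.eventually (gt_mem_nhds (by positivity : (0:ℝ) < ε / 2))).exists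
      have hLev : ∀ᶠ n in atTop, dcAvg F n ω < CF + 1 :=
        hω2.eventually (gt_mem_nhds (lt_add_one CF))
      have hNev : ∀ᶠ n in atTop, ∀ s ∈ N j, |dcAvg (ft s) n ω - ∫ x, f x ∂(Pt s)| < ε / 2 := by
        rw [Filter.eventually_all_finite (hNfin j)]
        intro s hs
        have ht1 := hω1 s (Or.inr (Set.mem_iUnion.2 ⟨j, hs⟩))
        have ht2 : Tendsto (fun n => |dcAvg (ft s) n ω - ∫ x, f x ∂(Pt s)|) atTop (𝓝 0) := by
          have := (ht1.sub_const (∫ x, f x ∂(Pt s))).abs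
          simpa using this
        exact ht2.eventually (gt_mem_nhds (by positivity : (0:ℝ) < ε / 2))
      have hcomb := hLev.and hNev
      rw [Filter.eventually_atTop] at hcomb
      obtain ⟨Nn, hNn⟩ := hcomb
      refine ⟨Nn, fun n hn => ?_⟩
      obtain ⟨h1, h2⟩ := hNn n hn
      rw [Real.dist_eq]
      have key : ∀ t : T, |dcAvg (ft ↑t) n ω - ∫ x, f x ∂(Pt ↑t)|
          ≤ (2 * CF + 1) * (1 / (j + 1)) + ε / 2 := by
        intro t
        obtain ⟨s, hs, hds⟩ := hNcov j ↑t t.2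
        have hsT : s ∈ T := hNsub j hs
        have e1 := hAlip n ω ↑t t.2 s hsT
        have e2 := h2 s hs
        have e3 := havlip s hsT ↑t t.2
        have hd1 : dist (↑t : EuclideanSpace ℝ (Fin m)) s ≤ 1 / (j + 1) := hds.le
        have hd2 : dist s (↑t : EuclideanSpace ℝ (Fin m)) ≤ 1 / (j + 1) := by
          rw [dist_comm]; exact hds.le
        have b1 : dcAvg F n ω * dist (↑t : EuclideanSpace ℝ (Fin m)) s
            ≤ (CF + 1) * (1 / (j + 1)) := by
          calc dcAvg F n ω * dist (↑t : EuclideanSpace ℝ (Fin m)) s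
              ≤ dcAvg F n ω * (1 / (j + 1)) := mul_le_mul_of_nonneg_left hd1 (hL0 n ω)
            _ ≤ (CF + 1) * (1 / (j + 1)) :=
                mul_le_mul_of_nonneg_right h1.le (by positivity)
        have b3 : CF * dist s (↑t : EuclideanSpace ℝ (Fin m)) ≤ CF * (1 / (j + 1)) :=
          mul_le_mul_of_nonneg_left hd2 hCF0
        have tri : |dcAvg (ft ↑t) n ω - ∫ x, f x ∂(Pt ↑t)|
            ≤ |dcAvg (ft ↑t) n ω - dcAvg (ft s) n ω|
              + |dcAvg (ft s) n ω - ∫ x, f x ∂(Pt s)|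
              + |(∫ x, f x ∂(Pt s)) - ∫ x, f x ∂(Pt ↑t)| := by
          have := abs_sub_le (dcAvg (ft ↑t) n ω) (dcAvg (ft s) n ω) (∫ x, f x ∂(Pt ↑t))
          have := abs_sub_le (dcAvg (ft s) n ω) (∫ x, f x ∂(Pt s)) (∫ x, f x ∂(Pt ↑t))
          linarith [abs_sub_le (dcAvg (ft ↑t) n ω) (dcAvg (ft s) n ω) (∫ x, f x ∂(Pt ↑t)),
            abs_sub_le (dcAvg (ft s) n ω) (∫ x, f x ∂(Pt s)) (∫ x, f x ∂(Pt ↑t))]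
        have hδ0 : (0:ℝ) ≤ 1 / (j + 1) := by positivity
        calc |dcAvg (ft ↑t) n ω - ∫ x, f x ∂(Pt ↑t)|
            ≤ |dcAvg (ft ↑t) n ω - dcAvg (ft s) n ω|
              + |dcAvg (ft s) n ω - ∫ x, f x ∂(Pt s)|
              + |(∫ x, f x ∂(Pt s)) - ∫ x, f x ∂(Pt ↑t)| := tri
          _ ≤ (CF + 1) * (1 / (j + 1)) + ε / 2 + CF * (1 / (j + 1)) := by
              have := e1.trans b1
              have := e3.trans b3
              linarith [e1.trans b1, e2.le, e3.trans b3]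
          _ = (2 * CF + 1) * (1 / (j + 1)) + ε / 2 := by ring
      have final : |φ n ω - c| ≤ (2 * CF + 1) * (1 / (j + 1)) + ε / 2 := by
        rw [hφdef, hcdef]
        exact aux_abs_ciInf_sub (him _ (hAbdd n ω)) (him _ havbdd) key
      linarith
    have := (hφt.sub_const c).abs
    simpa using this
end
end

section
/- Suppose the index set T of 𝒫 = {P_t : t ∈ T} is a compact subset of ℝ^m, T_o is an open set containing T, and f_{T_o} : ℝ × T_o → ℝ is a Borel measurable map with f_{T_o}(·, t) = f_t for every t ∈ T (so that E^{P_t}(f) = E^P(f_{T_o}(·, t)) for all t ∈ T) which is continuously differentiable in both arguments (x, t) on all of ℝ × T_o. If moreover E^P(sup_{t∈T} |f_t|) < +∞, then Ê̲_n^𝒫(f) is a strongly consistent estimator of E̲^𝒫(f). -/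
open MeasureTheory Filter Topology ProbabilityTheory
open scoped ENNReal

noncomputable section

/-- Infimum over a dense subset equals the infimum, for continuous `EReal`-valued maps. -/
lemma ereal_iInf_dense {α : Type*} [TopologicalSpace α] {s : Set α} (hs : Dense s)
    {F : α → EReal} (hF : Continuous F) : ⨅ a : s, F a = ⨅ a, F a := by
  refine le_antisymm (le_iInf fun a => ?_) (le_iInf fun d => iInf_le _ (d : α))
  have h1 : (𝓝[s] a).NeBot := mem_closure_iff_nhdsWithin_neBot.1 (hs a)
  refine ge_of_tendsto (hF.continuousAt.continuousWithinAt : Tendsto F (𝓝[s] a) (𝓝 (F a))) ?_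
  filter_upwards [self_mem_nhdsWithin] with y hy
  exact iInf_le _ (⟨y, hy⟩ : s)

/-- The `EReal`-valued infimum of a bounded-below real family is the coercion of its
real infimum. -/
lemma ereal_iInf_coe {α : Type*} [Nonempty α] (F : α → ℝ) (hbdd : BddBelow (Set.range F)) :
    ⨅ a, ((F a : ℝ) : EReal) = ((⨅ a, F a : ℝ) : EReal) := by
  refine le_antisymm ?_ (le_iInf fun a => EReal.coe_le_coe_iff.2 (ciInf_le hbdd a))
  obtain ⟨x, -, hx, hmem⟩ := exists_seq_tendsto_sInf (Set.range_nonempty F) hbdd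
  have hco : Tendsto (fun n => ((x n : ℝ) : EReal)) atTop (𝓝 ((sInf (Set.range F) : ℝ) : EReal)) :=
    (continuous_coe_real_ereal.tendsto _).comp hx
  have : sInf (Set.range F) = ⨅ a, F a := rfl
  rw [this] at hco
  refine ge_of_tendsto hco ?_
  filter_upwards with n
  obtain ⟨a, ha⟩ := hmem n
  rw [← ha]
  exact iInf_le _ a

/-- Measurability of a parametrized infimum over a separable index, continuous in
the parameter. -/
lemma measurable_ereal_iInf_coe {X : Type*} [MeasurableSpace X] {α : Type*} [TopologicalSpace α]
    [TopologicalSpace.SeparableSpace α] (F : X → α → ℝ)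
    (hmeas : ∀ a, Measurable fun x => F x a) (hcont : ∀ x, Continuous (F x)) :
    Measurable fun x => ⨅ a, ((F x a : ℝ) : EReal) := by
  obtain ⟨s, hsc, hsd⟩ := TopologicalSpace.exists_countable_dense α
  have heq : ∀ x, (⨅ a, ((F x a : ℝ) : EReal)) = ⨅ a : s, ((F x a : ℝ) : EReal) := fun x =>
    (ereal_iInf_dense hsd (continuous_coe_real_ereal.comp (hcont x))).symm
  simp_rw [heq]
  haveI := hsc.to_subtype
  exact Measurable.iInf fun a => (hmeas a).coe_real_ereal

lemma eabs_coe (r : ℝ) : eabs (r : EReal) = ((|r| : ℝ) : EReal) := by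
  rcases le_total r 0 with h | h
  · rw [eabs, abs_of_nonpos h, EReal.coe_neg, max_eq_right]
    rw [← EReal.coe_neg]
    exact EReal.coe_le_coe_iff.2 (by linarith)
  · rw [eabs, abs_of_nonneg h, max_eq_left]
    rw [← EReal.coe_neg]
    exact EReal.coe_le_coe_iff.2 (by linarith)



/-- Suppose `T ⊆ ℝ^m` is compact, `T_o` is an open set containing `T`, and
`f_{T_o} : ℝ × T_o → ℝ` is a Borel measurable extension of the family `(f_t)_{t∈T}` which is
continuously differentiable in both arguments on `ℝ × T_o`. If `E^P(sup_{t∈T} |f_t|) < +∞`,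
then `Ê̲_n^𝒫(f)` is a strongly consistent estimator of `E̲^𝒫(f)`. -/
theorem compact_parameter_consistency
    {m : ℕ}
    (T To : Set (EuclideanSpace ℝ (Fin m))) (hTne : T.Nonempty)
    (hTcomp : IsCompact T) (hTo : IsOpen To) (hTTo : T ⊆ To)
    (Pt : EuclideanSpace ℝ (Fin m) → Measure ℝ)
    (hPt : ∀ t ∈ T, IsProbabilityMeasure (Pt t))
    (P : Measure ℝ) [IsProbabilityMeasure P]
    (f : ℝ → ℝ) (hf : Measurable f)
    (hfint : ∀ t ∈ T, Integrable f (Pt t))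
    (hsup : BddAbove ((fun t => ∫ x, |f x| ∂(Pt t)) '' T))
    (ft : EuclideanSpace ℝ (Fin m) → ℝ → ℝ)
    (hftm : ∀ t ∈ T, Measurable (ft t)) (hfti : ∀ t ∈ T, Integrable (ft t) P)
    (hfte : ∀ t ∈ T, ∫ x, ft t x ∂P = ∫ x, f x ∂(Pt t))
    (hftea : ∀ t ∈ T, ∫ x, |ft t x| ∂P = ∫ x, |f x| ∂(Pt t))
    -- the measurable extension `f_{T_o}`, continuously differentiable in `(x, t)`
    (fTo : ℝ → EuclideanSpace ℝ (Fin m) → ℝ)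
    (hfTom : Measurable (fun p : ℝ × EuclideanSpace ℝ (Fin m) => fTo p.1 p.2))
    (hagree : ∀ t ∈ T, ∀ x : ℝ, fTo x t = ft t x)
    (hC1 : ContDiffOn ℝ 1 (fun p : ℝ × EuclideanSpace ℝ (Fin m) => fTo p.1 p.2)
      (Set.univ ×ˢ To))
    (hsupint : Integrable (fun x => ⨆ t : T, |ft t x|) P)
    (μ : Measure (ℕ → ℝ)) [IsProbabilityMeasure μ]
    (hmap : ∀ k : ℕ, μ.map (fun ω => ω k) = P)
    (hind : iIndepFun
      (fun k (ω : ℕ → ℝ) => ω k) μ) :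
    ∃ H : ℕ → (ℕ → ℝ) → EReal,
      (∀ n : ℕ, IsMinMeasCover μ
        (fun ω => eabs ((⨅ t : T, (((n : ℝ)⁻¹ *
            ∑ k ∈ Finset.range n, ft t (ω k) : ℝ) : EReal)) -
          ⨅ t : T, ((∫ x, f x ∂(Pt t) : ℝ) : EReal))) (H n)) ∧
      ∀ᵐ ω ∂μ, Tendsto (fun n : ℕ => H n ω) atTop (𝓝 (0 : EReal)) := by
  classical
  haveI hTneS : Nonempty ↥T := hTne.to_subtype
  haveI : CompactSpace ↥T := isCompact_iff_compactSpace.mp hTcomp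
  -- continuity of the extension in the parameter
  have hjc : ContinuousOn (fun p : ℝ × EuclideanSpace ℝ (Fin m) => fTo p.1 p.2)
      (Set.univ ×ˢ To) := hC1.continuousOn
  have hcx : ∀ x : ℝ, ContinuousOn (fun s => fTo x s) To := by
    intro x
    have h2 : Continuous fun s : EuclideanSpace ℝ (Fin m) => ((x, s) : ℝ × _) :=
      continuous_const.prodMk continuous_id
    exact hjc.comp h2.continuousOn (fun s hs => ⟨Set.mem_univ x, hs⟩)
  have hcsub : ∀ S : Set (EuclideanSpace ℝ (Fin m)), S ⊆ To → ∀ x : ℝ,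
      Continuous fun s : S => fTo x s := fun S hS x =>
    (hcx x).comp_continuous continuous_subtype_val (fun s => hS s.2)
  have hmx : ∀ s : EuclideanSpace ℝ (Fin m), Measurable fun x => fTo x s := fun s =>
    hfTom.comp (measurable_id.prodMk measurable_const)
  -- the envelope
  obtain ⟨env, henv⟩ : ∃ env : ℝ → ℝ, env = fun x => ⨆ t : T, |ft t x| := ⟨_, rfl⟩
  have henvint : Integrable env P := by rw [henv]; exact hsupint
  have henvb : ∀ (x : ℝ) (t : ↥T), |ft t.1 x| ≤ env x := by
    intro x t
    have heq : (fun t : T => |ft t.1 x|) = fun t : T => |fTo x t.1| := by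
      funext u; rw [hagree u.1 u.2]
    have hb : BddAbove (Set.range fun t : T => |ft t.1 x|) := by
      rw [heq]; exact (isCompact_range ((hcsub T hTTo x).abs)).bddAbove
    rw [henv]
    exact le_ciSup hb t
  -- the strong law of large numbers for our sequence
  have slln : ∀ g : ℝ → ℝ, Measurable g → Integrable g P →
      ∀ᵐ ω ∂μ, Tendsto (fun n : ℕ => (n : ℝ)⁻¹ * ∑ k ∈ Finset.range n, g (ω k)) atTop
        (𝓝 (∫ x, g x ∂P)) := by
    intro g hg hgi
    have hXm : ∀ k : ℕ, Measurable fun ω : ℕ → ℝ => g (ω k) := fun k =>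
      hg.comp (measurable_pi_apply k)
    have hmapg : ∀ k : ℕ, μ.map (fun ω : ℕ → ℝ => g (ω k)) = P.map g := by
      intro k
      rw [show (fun ω : ℕ → ℝ => g (ω k)) = g ∘ (fun ω : ℕ → ℝ => ω k) from rfl,
        ← Measure.map_map hg (measurable_pi_apply k), hmap k]
    have hint : Integrable (fun ω : ℕ → ℝ => g (ω 0)) μ := by
      have h1 : Integrable g (μ.map (fun ω : ℕ → ℝ => ω 0)) := by rw [hmap 0]; exact hgi
      exact (integrable_map_measure hg.aestronglyMeasurable
        (measurable_pi_apply 0).aemeasurable).1 h1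
    have hident : ∀ k : ℕ, IdentDistrib (fun ω : ℕ → ℝ => g (ω k))
        (fun ω : ℕ → ℝ => g (ω 0)) μ μ :=
      fun k => ⟨(hXm k).aemeasurable, (hXm 0).aemeasurable, by rw [hmapg k, hmapg 0]⟩
    have hpair : Pairwise (Function.onFun (IndepFun · · μ) fun k (ω : ℕ → ℝ) => g (ω k)) := by
      intro i j hij
      exact (hind.indepFun hij).comp hg hg
    have hE : ∫ ω, g (ω 0) ∂μ = ∫ x, g x ∂P := by
      rw [← hmap 0, integral_map (measurable_pi_apply 0).aemeasurable hg.aestronglyMeasurable]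
    have hsl := strong_law_ae_real (fun k (ω : ℕ → ℝ) => g (ω k)) hint hpair hident
    rw [hE] at hsl
    filter_upwards [hsl] with ω hω
    have heq : (fun n : ℕ => (n : ℝ)⁻¹ * ∑ k ∈ Finset.range n, g (ω k))
        = fun n : ℕ => (∑ k ∈ Finset.range n, g (ω k)) / n := by
      funext n; rw [div_eq_inv_mul]
    rw [heq]; exact hω
  -- empirical averages : continuity, boundedness, real infimum
  have hAcont : ∀ (n : ℕ) (ω : ℕ → ℝ),
      Continuous fun t : T => (n : ℝ)⁻¹ * ∑ k ∈ Finset.range n, ft t.1 (ω k) := by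
    intro n ω
    have heq : (fun t : T => (n : ℝ)⁻¹ * ∑ k ∈ Finset.range n, ft t.1 (ω k))
        = fun t : T => (n : ℝ)⁻¹ * ∑ k ∈ Finset.range n, fTo (ω k) t.1 := by
      funext t
      congr 1
      exact Finset.sum_congr rfl fun k _ => (hagree t.1 t.2 (ω k)).symm
    rw [heq]
    exact continuous_const.mul (continuous_finset_sum _ fun k _ => hcsub T hTTo (ω k))
  have hAbdd : ∀ (n : ℕ) (ω : ℕ → ℝ),
      BddBelow (Set.range fun t : T => (n : ℝ)⁻¹ * ∑ k ∈ Finset.range n, ft t.1 (ω k)) :=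
    fun n ω => (isCompact_range (hAcont n ω)).bddBelow
  obtain ⟨rA, hrA⟩ : ∃ rA : ℕ → (ℕ → ℝ) → ℝ, ∀ n ω, rA n ω
      = ⨅ t : T, (n : ℝ)⁻¹ * ∑ k ∈ Finset.range n, ft t.1 (ω k) := ⟨_, fun _ _ => rfl⟩
  have hAconv : ∀ (n : ℕ) (ω : ℕ → ℝ),
      (⨅ t : T, (((n : ℝ)⁻¹ * ∑ k ∈ Finset.range n, ft t.1 (ω k) : ℝ) : EReal))
      = ((rA n ω : ℝ) : EReal) := by
    intro n ω
    rw [hrA]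
    exact ereal_iInf_coe _ (hAbdd n ω)
  -- population means
  have hDbdd : BddBelow (Set.range fun t : T => ∫ x, ft t.1 x ∂P) := by
    refine ⟨-∫ x, env x ∂P, ?_⟩
    rintro _ ⟨t, rfl⟩
    have h1 : ∫ x, -env x ∂P ≤ ∫ x, ft t.1 x ∂P :=
      integral_mono henvint.neg (hfti t.1 t.2) (fun x => (abs_le.1 (henvb x t)).1)
    rwa [integral_neg] at h1
  obtain ⟨rD, hrD⟩ : ∃ rD : ℝ, rD = ⨅ t : T, ∫ x, ft t.1 x ∂P := ⟨_, rfl⟩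
  have hDconv : (⨅ t : T, ((∫ x, f x ∂(Pt t.1) : ℝ) : EReal)) = ((rD : ℝ) : EReal) := by
    have heq : ∀ t : ↥T, ((∫ x, f x ∂(Pt t.1) : ℝ) : EReal) = ((∫ x, ft t.1 x ∂P : ℝ) : EReal) := by
      intro t; rw [hfte t.1 t.2]
    rw [iInf_congr heq, hrD]
    exact ereal_iInf_coe _ hDbdd
  have hrDle : ∀ t : ↥T, rD ≤ ∫ x, ft t.1 x ∂P := by
    intro t; rw [hrD]; exact ciInf_le hDbdd t
  -- measurability of the empirical infimum
  have hrAmeas : ∀ n, Measurable (rA n) := by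
    intro n
    have hm : Measurable fun ω : ℕ → ℝ =>
        ⨅ t : T, (((n : ℝ)⁻¹ * ∑ k ∈ Finset.range n, ft t.1 (ω k) : ℝ) : EReal) := by
      refine measurable_ereal_iInf_coe _ (fun t => ?_) (hAcont n)
      exact measurable_const.mul
        (Finset.measurable_sum _ fun k _ => (hftm t.1 t.2).comp (measurable_pi_apply k))
    have heq : rA n = fun ω =>
        (⨅ t : T, (((n : ℝ)⁻¹ * ∑ k ∈ Finset.range n, ft t.1 (ω k) : ℝ) : EReal)).toReal := by
      funext ω; rw [hAconv n ω, EReal.toReal_coe]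
    rw [heq]
    exact hm.ereal_toReal
  -- pointwise identification of the statement's function
  have hptw : ∀ (n : ℕ) (ω : ℕ → ℝ),
      eabs ((⨅ t : T, (((n : ℝ)⁻¹ * ∑ k ∈ Finset.range n, ft t.1 (ω k) : ℝ) : EReal)) -
          ⨅ t : T, ((∫ x, f x ∂(Pt t.1) : ℝ) : EReal))
      = ((|rA n ω - rD| : ℝ) : EReal) := by
    intro n ω
    rw [hDconv, hAconv n ω, ← EReal.coe_sub, eabs_coe]
  refine ⟨fun n ω => ((|rA n ω - rD| : ℝ) : EReal), fun n => ?_, ?_⟩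
  · refine ⟨(((hrAmeas n).sub measurable_const).abs).coe_real_ereal,
      fun ω => le_of_eq (hptw n ω), fun g' _ hle => Eventually.of_forall fun ω => ?_⟩
    exact le_trans (le_of_eq (hptw n ω).symm) (hle ω)
  · -- upper half
    have hupper : ∀ j : ℕ, ∀ᵐ ω ∂μ, ∀ᶠ n in atTop, rA n ω < rD + 1 / ((j : ℝ) + 1) := by
      intro j
      have hεpos : (0 : ℝ) < 1 / ((j : ℝ) + 1) := by positivity
      have h1 : (⨅ t : T, ∫ x, ft t.1 x ∂P) < rD + 1 / ((j : ℝ) + 1) := by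
        rw [← hrD]; linarith
      obtain ⟨t0, ht0⟩ := exists_lt_of_ciInf_lt h1
      filter_upwards [slln (ft t0.1) (hftm t0.1 t0.2) (hfti t0.1 t0.2)] with ω hω
      filter_upwards [hω.eventually_lt_const ht0] with n hn
      rw [hrA]
      exact lt_of_le_of_lt (ciInf_le (hAbdd n ω) t0) hn
    -- lower half
    have hlower : ∀ j : ℕ, ∀ᵐ ω ∂μ, ∀ᶠ n in atTop, rD - 1 / ((j : ℝ) + 1) < rA n ω := by
      intro j
      have hεpos : (0 : ℝ) < 1 / ((j : ℝ) + 1) := by positivity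
      have key : ∀ t : ↥T, ∃ δ : ℝ, 0 < δ ∧ ∃ g : ℝ → ℝ, Measurable g ∧ Integrable g P ∧
          rD - 1 / ((j : ℝ) + 1) < ∫ x, g x ∂P ∧
          ∀ s : EuclideanSpace ℝ (Fin m), s ∈ T →
            s ∈ Metric.ball (t : EuclideanSpace ℝ (Fin m)) δ → ∀ x, g x ≤ fTo x s := by
        intro t
        obtain ⟨G, hG⟩ : ∃ G : ℕ → ℝ → ℝ, ∀ k x, G k x =
            ⨅ s : ↥(T ∩ Metric.ball (t : EuclideanSpace ℝ (Fin m)) (1 / ((k : ℝ) + 1))),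
              fTo x s.1 := ⟨_, fun _ _ => rfl⟩
        have hkpos : ∀ k : ℕ, (0 : ℝ) < 1 / ((k : ℝ) + 1) := fun k => by positivity
        have htmem : ∀ k : ℕ, (t : EuclideanSpace ℝ (Fin m)) ∈
            T ∩ Metric.ball (t : EuclideanSpace ℝ (Fin m)) (1 / ((k : ℝ) + 1)) :=
          fun k => ⟨t.2, Metric.mem_ball_self (hkpos k)⟩
        haveI hne : ∀ k : ℕ, Nonempty
            ↥(T ∩ Metric.ball (t : EuclideanSpace ℝ (Fin m)) (1 / ((k : ℝ) + 1))) :=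
          fun k => ⟨⟨t.1, htmem k⟩⟩
        have hsubTo : ∀ k : ℕ,
            T ∩ Metric.ball (t : EuclideanSpace ℝ (Fin m)) (1 / ((k : ℝ) + 1)) ⊆ To :=
          fun k => Set.inter_subset_left.trans hTTo
        have hbdd : ∀ (k : ℕ) (x : ℝ), BddBelow (Set.range fun s :
            ↥(T ∩ Metric.ball (t : EuclideanSpace ℝ (Fin m)) (1 / ((k : ℝ) + 1))) =>
            fTo x s.1) := by
          intro k x
          refine ⟨-env x, ?_⟩
          rintro _ ⟨s, rfl⟩
          show -env x ≤ fTo x s.1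
          rw [hagree s.1 s.2.1]
          exact (abs_le.1 (henvb x ⟨s.1, s.2.1⟩)).1
        have hub : ∀ (k : ℕ) (x : ℝ), G k x ≤ ft t.1 x := by
          intro k x
          rw [hG]
          have h1 := ciInf_le (hbdd k x) ⟨t.1, htmem k⟩
          rwa [hagree t.1 t.2] at h1
        have habs : ∀ (k : ℕ) (x : ℝ), |G k x| ≤ env x := by
          intro k x
          refine abs_le.2 ⟨?_, le_trans (hub k x)
            (le_trans (le_abs_self _) (henvb x t))⟩
          rw [hG]
          refine le_ciInf fun s => ?_
          rw [hagree s.1 s.2.1]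
          exact (abs_le.1 (henvb x ⟨s.1, s.2.1⟩)).1
        have hGmeas : ∀ k, Measurable (G k) := by
          intro k
          have hm : Measurable fun x : ℝ => ⨅ s :
              ↥(T ∩ Metric.ball (t : EuclideanSpace ℝ (Fin m)) (1 / ((k : ℝ) + 1))),
              ((fTo x s.1 : ℝ) : EReal) :=
            measurable_ereal_iInf_coe _ (fun s => hmx s.1) (fun x => hcsub _ (hsubTo k) x)
          have heq : G k = fun x => (⨅ s :
              ↥(T ∩ Metric.ball (t : EuclideanSpace ℝ (Fin m)) (1 / ((k : ℝ) + 1))),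
              ((fTo x s.1 : ℝ) : EReal)).toReal := by
            funext x
            rw [ereal_iInf_coe _ (hbdd k x), EReal.toReal_coe, hG]
          rw [heq]
          exact hm.ereal_toReal
        have hGint : ∀ k, Integrable (G k) P := fun k =>
          henvint.mono' (hGmeas k).aestronglyMeasurable
            (Eventually.of_forall fun x => by rw [Real.norm_eq_abs]; exact habs k x)
        have hGtend : ∀ x : ℝ, Tendsto (fun k => G k x) atTop (𝓝 (ft t.1 x)) := by
          intro x
          rw [Metric.tendsto_atTop]
          intro ε' hε'
          have hct : ContinuousAt (fun s => fTo x s) (t : EuclideanSpace ℝ (Fin m)) :=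
            (hcx x).continuousAt (hTo.mem_nhds (hTTo t.2))
          rw [Metric.continuousAt_iff] at hct
          obtain ⟨δ0, hδ0, hball⟩ := hct (ε' / 2) (by linarith)
          obtain ⟨K, hK⟩ := exists_nat_one_div_lt hδ0
          refine ⟨K, fun k hk => ?_⟩
          have hmono : 1 / ((k : ℝ) + 1) ≤ 1 / ((K : ℝ) + 1) := by
            apply one_div_le_one_div_of_le (by positivity)
            have : (K : ℝ) ≤ (k : ℝ) := Nat.cast_le.2 hk
            linarith
          have h1 : ft t.1 x - ε' / 2 ≤ G k x := by
            rw [hG]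
            refine le_ciInf fun s => ?_
            have hd : dist (s : EuclideanSpace ℝ (Fin m)) (t : EuclideanSpace ℝ (Fin m)) < δ0 := by
              have hds := Metric.mem_ball.1 s.2.2
              linarith
            have hb := hball hd
            rw [Real.dist_eq] at hb
            have hb1 := (abs_lt.1 hb).1
            rw [hagree t.1 t.2] at hb1
            linarith
          have h2 : G k x ≤ ft t.1 x := hub k x
          rw [Real.dist_eq]
          refine abs_lt.2 ⟨by linarith, by linarith⟩
        have hDCT : Tendsto (fun k => ∫ x, G k x ∂P) atTop (𝓝 (∫ x, ft t.1 x ∂P)) := by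
          exact tendsto_integral_of_dominated_convergence env
            (fun k => (hGmeas k).aestronglyMeasurable) henvint
            (fun k => Eventually.of_forall fun x => by
              rw [Real.norm_eq_abs]; exact habs k x)
            (Eventually.of_forall fun x => hGtend x)
        have hlim : rD - 1 / ((j : ℝ) + 1) < ∫ x, ft t.1 x ∂P :=
          lt_of_lt_of_le (by linarith) (hrDle t)
        obtain ⟨k, hk⟩ := (hDCT.eventually_const_lt hlim).exists
        refine ⟨1 / ((k : ℝ) + 1), hkpos k, G k, hGmeas k, hGint k, hk, ?_⟩
        intro s hsT hsb x
        rw [hG]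
        exact ciInf_le (hbdd k x) ⟨s, hsT, hsb⟩
      choose δ hδpos g hgmeas hgint hgE hgle using key
      have hcover : T ⊆ ⋃ t : ↥T, Metric.ball (t : EuclideanSpace ℝ (Fin m)) (δ t) :=
        fun x hx => Set.mem_iUnion.2 ⟨⟨x, hx⟩, Metric.mem_ball_self (hδpos ⟨x, hx⟩)⟩
      obtain ⟨s, hs⟩ := hTcomp.elim_finite_subcover _ (fun t => Metric.isOpen_ball) hcover
      have hsne : s.Nonempty := by
        obtain ⟨t0⟩ := hTneS
        have h1 := hs t0.2
        rw [Set.mem_iUnion₂] at h1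
        obtain ⟨i, hi, -⟩ := h1
        exact ⟨i, hi⟩
      have hae : ∀ᵐ ω ∂μ, ∀ i ∈ (↑s : Set ↥T),
          Tendsto (fun n : ℕ => (n : ℝ)⁻¹ * ∑ k ∈ Finset.range n, g i (ω k)) atTop
            (𝓝 (∫ x, g i x ∂P)) :=
        (ae_ball_iff s.countable_toSet).2 fun i _ => slln (g i) (hgmeas i) (hgint i)
      filter_upwards [hae] with ω hω
      have hev : ∀ᶠ n : ℕ in atTop, ∀ i ∈ s,
          rD - 1 / ((j : ℝ) + 1) < (n : ℝ)⁻¹ * ∑ k ∈ Finset.range n, g i (ω k) := by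
        rw [eventually_all_finset]
        intro i hi
        exact (hω i hi).eventually_const_lt (hgE i)
      filter_upwards [hev] with n hn
      rw [hrA]
      have hmin : rD - 1 / ((j : ℝ) + 1)
          < s.inf' hsne (fun i => (n : ℝ)⁻¹ * ∑ k ∈ Finset.range n, g i (ω k)) :=
        (Finset.lt_inf'_iff _).2 hn
      refine lt_of_lt_of_le hmin (le_ciInf fun u => ?_)
      have h1 := hs u.2
      rw [Set.mem_iUnion₂] at h1
      obtain ⟨i, hi, hub⟩ := h1
      refine le_trans (Finset.inf'_le _ hi) ?_
      have hterm : ∀ k ∈ Finset.range n, g i (ω k) ≤ ft u.1 (ω k) := by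
        intro k _
        have h2 := hgle i u.1 u.2 hub (ω k)
        rwa [hagree u.1 u.2 (ω k)] at h2
      exact mul_le_mul_of_nonneg_left (Finset.sum_le_sum hterm) (by positivity)
    -- combine
    have hmain : ∀ᵐ ω ∂μ, Tendsto (fun n => rA n ω) atTop (𝓝 rD) := by
      filter_upwards [ae_all_iff.2 hupper, ae_all_iff.2 hlower] with ω hu hl
      rw [Metric.tendsto_atTop]
      intro ε hε
      obtain ⟨j, hj⟩ := exists_nat_one_div_lt hε
      have hev := (hu j).and (hl j)
      rw [eventually_atTop] at hev
      obtain ⟨N, hN⟩ := hev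
      refine ⟨N, fun n hn => ?_⟩
      obtain ⟨h1, h2⟩ := hN n hn
      rw [Real.dist_eq, abs_sub_lt_iff]
      constructor <;> linarith
    filter_upwards [hmain] with ω hω
    have h1 : Tendsto (fun n => |rA n ω - rD|) atTop (𝓝 0) := by
      have h2 := hω.sub_const rD
      rw [sub_self] at h2
      have h3 := (continuous_abs.tendsto 0).comp h2
      rwa [abs_zero] at h3
    have h2 := (continuous_coe_real_ereal.tendsto 0).comp h1
    rw [show ((0 : ℝ) : EReal) = (0 : EReal) from rfl] at h2
    exact h2
end
end
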